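/- Every d-lexsegment monomial ideal I in S = K[x_1,...,x_n] is strongly stable and d-regular (i.e., reg(I) ≤ d). -/

import Mathlib

set_option synthInstance.maxHeartbeats 1000000
set_option maxHeartbeats 1000000

open MvPolynomial

namespace Paper

/-! ### Combinatorics of monomials -/

/-- a monomial in `n` variables, encoded by its exponent vector -/
abbrev Mono (n : ℕ) := Fin n →₀ ℕ

/-- total degree of a monomial -/
def mdeg {n : ℕ} (u : Mono n) : ℕ := u.sum fun _ e => e

/-- `maxVar u` is the largest index (1-indexed) of a variable dividing `u`; `maxVar 1 = 0`. -/
def maxVar {n : ℕ} (u : Mono n) : ℕ := u.support.sup fun i => (i : ℕ) + 1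

/-- `LexGT u v` : `u >_lex v` (lexicographic order with `x_1 > x_2 > ⋯ > x_n`). -/
def LexGT {n : ℕ} (u v : Mono n) : Prop :=
  ∃ i : Fin n, v i < u i ∧ ∀ j : Fin n, j < i → u j = v j

/-- strongly stable set of monomials -/
def SStableSet {n : ℕ} (V : Set (Mono n)) : Prop :=
  ∀ u : Mono n, ∀ p q : Fin n, p < q → u + Finsupp.single q 1 ∈ V →
    u + Finsupp.single p 1 ∈ V

/-- `Dk V k = { u / x_k : u ∈ V, max(u) = k }` (here `k : Fin n` is the 0-indexed variable,
corresponding to the 1-indexed variable `k+1`) -/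
def Dk {n : ℕ} (V : Set (Mono n)) (k : Fin n) : Set (Mono n) :=
  {w | w + Finsupp.single k 1 ∈ V ∧ maxVar (w + Finsupp.single k 1) = (k : ℕ) + 1}

/-- `Mle j W = { u ∈ W : max(u) ≤ j }` -/
def Mle {n : ℕ} (j : ℕ) (W : Set (Mono n)) : Set (Mono n) := {u ∈ W | maxVar u ≤ j}

/-- `L` is a lexsegment set of monomials inside `K[x_1,…,x_k]`. -/
def LexSegIn {n : ℕ} (k : ℕ) (L : Set (Mono n)) : Prop :=
  (∀ u ∈ L, maxVar u ≤ k) ∧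
  ∀ u ∈ L, ∀ v : Mono n, mdeg v = mdeg u → maxVar v ≤ k → LexGT v u → v ∈ L

/-- `V` is a `d`-linear lexsegment set of monomials of degree `d`. -/
def DLinearLexSeg {n : ℕ} (d : ℕ) (V : Set (Mono n)) : Prop :=
  (∀ u ∈ V, mdeg u = d) ∧ SStableSet V ∧
    ∀ k : Fin n, LexSegIn ((k : ℕ) + 1) (Dk V k)

/-! ### Ideal-level notions -/

variable {n : ℕ} {K : Type} [Field K]

/-- `I` is a monomial ideal. -/
def MonomialIdeal (I : Ideal (MvPolynomial (Fin n) K)) : Prop :=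
  ∀ p ∈ I, ∀ m ∈ p.support, (monomial m (1 : K)) ∈ I

/-- `u` is a minimal monomial generator of the monomial ideal `I`. -/
def MinGen (I : Ideal (MvPolynomial (Fin n) K)) (u : Mono n) : Prop :=
  monomial u (1 : K) ∈ I ∧ ∀ v : Mono n, v ≤ u → v ≠ u → monomial v (1 : K) ∉ I

/-- stable monomial ideal -/
def StableIdeal (I : Ideal (MvPolynomial (Fin n) K)) : Prop :=
  MonomialIdeal I ∧
  ∀ u : Mono n, ∀ q : Fin n, maxVar u = (q : ℕ) + 1 → monomial u (1 : K) ∈ I →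
    ∀ p : Fin n, p < q →
      monomial (u - Finsupp.single q 1 + Finsupp.single p 1) (1 : K) ∈ I

/-- strongly stable monomial ideal -/
def SStableIdeal (I : Ideal (MvPolynomial (Fin n) K)) : Prop :=
  MonomialIdeal I ∧
  ∀ u : Mono n, ∀ q : Fin n, 0 < u q → monomial u (1 : K) ∈ I →
    ∀ p : Fin n, p < q →
      monomial (u - Finsupp.single q 1 + Finsupp.single p 1) (1 : K) ∈ I

/-- the set of (exponent vectors of) monomials of degree `k` lying in `I` -/
def monSlice (I : Ideal (MvPolynomial (Fin n) K)) (k : ℕ) : Set (Mono n) :=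
  {u | mdeg u = k ∧ monomial u (1 : K) ∈ I}

/-- homogeneous (graded) ideal -/
def HomIdeal (I : Ideal (MvPolynomial (Fin n) K)) : Prop :=
  ∀ p ∈ I, ∀ k : ℕ, homogeneousComponent k p ∈ I

/-! ### Graded components and Hilbert functions -/

/-- the degree-`z` homogeneous component of `I`, as a `K`-subspace -/
noncomputable def hComp (I : Ideal (MvPolynomial (Fin n) K)) (z : ℤ) :
    Submodule K (MvPolynomial (Fin n) K) :=
  if 0 ≤ z then
    (Submodule.restrictScalars K I) ⊓ homogeneousSubmodule (Fin n) K z.toNat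
  else ⊥

/-- Hilbert function `H(I,t)` of the ideal `I` -/
noncomputable def hfI (I : Ideal (MvPolynomial (Fin n) K)) (t : ℕ) : ℕ :=
  Module.finrank K (hComp I (t : ℤ))

/-- Hilbert function `H(S/I,t)` of the quotient `S/I` -/
noncomputable def hfQ (I : Ideal (MvPolynomial (Fin n) K)) (t : ℕ) : ℕ :=
  Module.finrank K
    (homogeneousSubmodule (Fin n) K t ⧸
      Submodule.comap (homogeneousSubmodule (Fin n) K t).subtype
        (Submodule.restrictScalars K I))

/-! ### Graded Betti numbers via the Koszul complex, and regularity -/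

lemma mulX_mem (I : Ideal (MvPolynomial (Fin n) K)) (k : Fin n) (z : ℤ)
    {p : MvPolynomial (Fin n) K} (hp : p ∈ hComp I z) : X k * p ∈ hComp I (z + 1) := by
  unfold hComp at *
  by_cases h : 0 ≤ z
  · simp only [if_pos h] at hp
    have h1 : (0:ℤ) ≤ z + 1 := by omega
    simp only [if_pos h1]
    refine ⟨Ideal.mul_mem_left _ _ hp.1, ?_⟩
    have h2 : p.IsHomogeneous z.toNat := (mem_homogeneousSubmodule _ _).1 hp.2
    have h3 := (isHomogeneous_X K k).mul h2
    have hz : (z + 1).toNat = 1 + z.toNat := by omega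
    exact (mem_homogeneousSubmodule _ _).2 (hz ▸ h3)
  · simp only [if_neg h] at hp
    simp only [Submodule.mem_bot] at hp
    subst hp
    simp

/-- multiplication by `X k` as a linear map between graded components of `I` -/
noncomputable def kosMulX (I : Ideal (MvPolynomial (Fin n) K)) (k : Fin n) (z : ℤ) :
    hComp I z →ₗ[K] hComp I (z + 1) :=
  LinearMap.codRestrict _ ((LinearMap.mulLeft K (X k)).comp (hComp I z).subtype)
    fun p => mulX_mem I k z p.2

/-- transport along an equality of degrees -/
noncomputable def hCompCast (I : Ideal (MvPolynomial (Fin n) K)) {z z' : ℤ} (h : z = z') :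
    hComp I z →ₗ[K] hComp I z' :=
  Submodule.inclusion (le_of_eq (by rw [h]))

/-- the degree-`j` strand of the Koszul differential
`I ⊗ Λ^{i+1} K^n → I ⊗ Λ^i K^n` of `I` (tensored over `S` with the Koszul complex on
`x_1,…,x_n`), whose homology computes `Tor_•(I, K)` with its internal grading. -/
noncomputable def kosD (I : Ideal (MvPolynomial (Fin n) K)) (i : ℕ) (j : ℤ) :
    ({T : Finset (Fin n) // T.card = i + 1} → hComp I (j - (i + 1))) →ₗ[K]
    ({T : Finset (Fin n) // T.card = i} → hComp I (j - i)) :=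
  LinearMap.pi fun T =>
    ∑ k ∈ ((T : Finset (Fin n))ᶜ).attach,
      ((-1 : K) ^ (((T : Finset (Fin n)).filter fun a => a < (k : Fin n)).card)) •
        ((hCompCast I (by omega) :
            hComp I (j - ((i : ℤ) + 1) + 1) →ₗ[K] hComp I (j - i)) ∘ₗ
          (kosMulX I k (j - ((i : ℤ) + 1))) ∘ₗ
          (LinearMap.proj (⟨insert (k : Fin n) (T : Finset (Fin n)), by
              rw [Finset.card_insert_of_notMem (Finset.mem_compl.mp k.2), T.2]⟩ :
            {T : Finset (Fin n) // T.card = i + 1})))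

/-- the cycles of the Koszul complex of `I` at homological position `i`, internal degree `j` -/
noncomputable def bettiKer (I : Ideal (MvPolynomial (Fin n) K)) (i : ℕ) (j : ℤ) :
    Submodule K ({T : Finset (Fin n) // T.card = i} → hComp I (j - i)) :=
  match i with
  | 0 => ⊤
  | i' + 1 => LinearMap.ker (kosD I i' j)

/-- the graded Betti number `β_{ij}(I) = dim_K Tor_i(I,K)_j`, computed as the dimension of
the homology of the degree-`j` strand of the Koszul complex:
`dim ker - dim (im ⊓ ker)`. -/
noncomputable def betti (I : Ideal (MvPolynomial (Fin n) K)) (i : ℕ) (j : ℤ) : ℕ :=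
  Module.finrank K (bettiKer I i j) -
    Module.finrank K (LinearMap.range (kosD I i j) ⊓ bettiKer I i j :
      Submodule K ({T : Finset (Fin n) // T.card = i} → hComp I (j - i)))

/-- Castelnuovo–Mumford regularity `reg(I) = max{k : β_{i,i+k}(I) ≠ 0 for some i}` -/
noncomputable def reg (I : Ideal (MvPolynomial (Fin n) K)) : ℤ :=
  sSup {k : ℤ | ∃ i : ℕ, betti I i ((i : ℤ) + k) ≠ 0}

/-- lexsegment ideal -/
def LexIdeal (I : Ideal (MvPolynomial (Fin n) K)) : Prop :=
  MonomialIdeal I ∧ ∀ k : ℕ, LexSegIn n (monSlice I k)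

/-- `d`-lexsegment ideal: `I_{≥d}` is generated by a `d`-linear lexsegment set of monomials
of degree `d`, and `I_k` is lexsegment for all `k < d`. -/
def DLexIdeal (d : ℕ) (I : Ideal (MvPolynomial (Fin n) K)) : Prop :=
  MonomialIdeal I ∧
  DLinearLexSeg d (monSlice I d) ∧
  (∀ u : Mono n, d ≤ mdeg u → monomial u (1 : K) ∈ I → ∃ v ∈ monSlice I d, v ≤ u) ∧
  (∀ k : ℕ, k < d → LexSegIn n (monSlice I k))


/-! ### Auxiliary development for the proof -/

section MonoAux
variable {n : ℕ}

lemma mdeg_add (u v : Mono n) : mdeg (u + v) = mdeg u + mdeg v := by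
  unfold mdeg
  exact Finsupp.sum_add_index' (fun _ => rfl) (fun _ _ _ => rfl)

lemma mdeg_single (i : Fin n) (e : ℕ) : mdeg (Finsupp.single i e) = e := by
  unfold mdeg
  exact Finsupp.sum_single_index rfl

lemma mdeg_zero : mdeg (0 : Mono n) = 0 := rfl

lemma mdeg_eq_degree (u : Mono n) : mdeg u = u.degree := rfl

lemma mono_ne_zero_of_mdeg {u : Mono n} (h : mdeg u ≠ 0) : u ≠ 0 := by
  intro h0; exact h (by rw [h0]; rfl)

lemma sub_add_single {u : Mono n} {i : Fin n} (h : u i ≠ 0) :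
    u - Finsupp.single i 1 + Finsupp.single i 1 = u := by
  ext s
  rcases eq_or_ne i s with hs | hs
  · subst hs
    simp only [Finsupp.add_apply, Finsupp.tsub_apply, Finsupp.single_eq_same]
    omega
  · simp [Finsupp.single_apply, hs, Finsupp.tsub_apply]

lemma mdeg_sub_single {u : Mono n} {i : Fin n} (h : u i ≠ 0) :
    mdeg (u - Finsupp.single i 1) + 1 = mdeg u := by
  conv_rhs => rw [← sub_add_single h]
  rw [mdeg_add, mdeg_single]

lemma maxVar_le (u : Mono n) : maxVar u ≤ n := by
  refine Finset.sup_le fun i _ => ?_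
  exact i.isLt

lemma coord_of_eq {u v : Mono n} (h : u = v) (s : Fin n) : u s = v s := by rw [h]

lemma mono_identA {u v w : Mono n} {p q : Fin n} (hpq : p ≠ q) (h : v + w = u)
    (hvq : v q ≠ 0) (hwp : w p ≠ 0) :
    u - Finsupp.single q 1
      = (v - Finsupp.single q 1 + Finsupp.single p 1) + (w - Finsupp.single p 1) := by
  ext s
  have h1 : v s + w s = u s := by
    have := coord_of_eq h s; simpa using this
  simp only [Finsupp.add_apply, Finsupp.tsub_apply, Finsupp.single_apply]
  rcases eq_or_ne q s with rfl | hqs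
  · have hps : ¬ p = q := hpq
    simp only [if_pos rfl, if_neg hps, eq_self_iff_true, if_true]
    omega
  · simp only [if_neg hqs]
    rcases eq_or_ne p s with rfl | hps
    · simp only [if_pos rfl, eq_self_iff_true, if_true]; omega
    · simp only [if_neg hps]; omega

lemma mono_identB {u v w : Mono n} {p q : Fin n} (hpq : p ≠ q) (h : v + w = u)
    (hvq : v q ≠ 0) :
    u - Finsupp.single q 1 + Finsupp.single p 1
      = (v - Finsupp.single q 1 + Finsupp.single p 1) + w := by
  ext s
  have h1 : v s + w s = u s := by
    have := coord_of_eq h s; simpa using this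
  simp only [Finsupp.add_apply, Finsupp.tsub_apply, Finsupp.single_apply]
  rcases eq_or_ne q s with rfl | hqs
  · have hps : ¬ p = q := hpq
    simp only [if_pos rfl, if_neg hps, eq_self_iff_true, if_true]
    omega
  · simp only [if_neg hqs]
    rcases eq_or_ne p s with rfl | hps
    · simp only [if_pos rfl, eq_self_iff_true, if_true]; omega
    · simp only [if_neg hps]; omega

lemma mono_identC {u v w : Mono n} {p q : Fin n} (h : v + w = u) (hwq : w q ≠ 0) :
    u - Finsupp.single q 1 + Finsupp.single p 1
      = v + (w - Finsupp.single q 1 + Finsupp.single p 1) := by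
  ext s
  have h1 : v s + w s = u s := by
    have := coord_of_eq h s; simpa using this
  simp only [Finsupp.add_apply, Finsupp.tsub_apply, Finsupp.single_apply]
  rcases eq_or_ne q s with rfl | hqs
  · simp only [if_pos rfl, eq_self_iff_true, if_true]; omega
  · simp only [if_neg hqs]; omega

lemma mono_identD {u v w : Mono n} {q : Fin n} (h : v + w = u) (hwq : w q ≠ 0) :
    u - Finsupp.single q 1 = v + (w - Finsupp.single q 1) := by
  ext s
  have h1 : v s + w s = u s := by
    have := coord_of_eq h s; simpa using this
  simp only [Finsupp.add_apply, Finsupp.tsub_apply, Finsupp.single_apply]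
  rcases eq_or_ne q s with rfl | hqs
  · simp only [eq_self_iff_true, if_true]; omega
  · simp only [if_neg hqs]; omega

lemma mono_identE {a : Mono n} {t v : Fin n} (htv : t ≠ v) (hat : a t ≠ 0) :
    a - Finsupp.single t 1 + Finsupp.single v 1
      = a + Finsupp.single v 1 - Finsupp.single t 1 := by
  ext s
  simp only [Finsupp.add_apply, Finsupp.tsub_apply, Finsupp.single_apply]
  rcases eq_or_ne t s with rfl | hts
  · have : ¬ v = t := fun hc => htv hc.symm
    simp only [if_pos rfl, if_neg this, eq_self_iff_true, if_true]; omega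
  · simp only [if_neg hts]; omega

end MonoAux

section IdealAux
variable {n : ℕ} {K : Type} [Field K] {I : Ideal (MvPolynomial (Fin n) K)}

lemma monomial_dvd_mem {u v : Mono n} (hle : v ≤ u) (hv : monomial v (1:K) ∈ I) :
    monomial u (1:K) ∈ I := by
  have h : monomial u (1:K) = monomial (u - v) 1 * monomial v 1 := by
    rw [monomial_mul, one_mul, tsub_add_cancel_of_le hle]
  rw [h]
  exact Ideal.mul_mem_left _ _ hv

variable {d : ℕ}

lemma sstable_of_dlex (hd : 0 < d) (hI : DLexIdeal d I) : SStableIdeal I := by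
  obtain ⟨hmon, ⟨hVd, hV, _⟩, hdiv, hlex⟩ := hI
  refine ⟨hmon, fun u q hq hu p hpq => ?_⟩
  rcases lt_trichotomy (mdeg u) d with hk | hk | hk
  · -- low degree : lexsegment
    have hmem : u ∈ monSlice I (mdeg u) := ⟨rfl, hu⟩
    have h2 := (hlex (mdeg u) hk).2 u hmem (u - Finsupp.single q 1 + Finsupp.single p 1)
    have hdeg : mdeg (u - Finsupp.single q 1 + Finsupp.single p 1) = mdeg u := by
      rw [mdeg_add, mdeg_single, mdeg_sub_single (by omega)]
    have hlexgt : LexGT (u - Finsupp.single q 1 + Finsupp.single p 1) u := by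
      refine ⟨p, ?_, fun j hj => ?_⟩
      · have hpq' : q ≠ p := (ne_of_gt hpq)
        simp only [Finsupp.add_apply, Finsupp.tsub_apply, Finsupp.single_apply,
          if_pos rfl, if_neg hpq', tsub_zero, if_true]
        omega
      · have h1 : q ≠ j := by intro h; exact absurd (h ▸ hj) (by exact not_lt.mpr (le_of_lt hpq))
        have h2 : p ≠ j := ne_of_gt hj
        simp [Finsupp.single_apply, h1, h2, Finsupp.tsub_apply]
    exact (h2 hdeg (maxVar_le _) hlexgt).2
  · -- degree d : strongly stable slice
    have hmem : u - Finsupp.single q 1 + Finsupp.single q 1 ∈ monSlice I d := by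
      rw [sub_add_single (by omega)]; exact ⟨hk, hu⟩
    exact (hV (u - Finsupp.single q 1) p q hpq hmem).2
  · -- high degree : use a degree-d divisor
    obtain ⟨v, hvV, hvle⟩ := hdiv u (le_of_lt hk) hu
    have hu' : v + (u - v) = u := add_tsub_cancel_of_le hvle
    set w := u - v with hw
    by_cases hwq : w q = 0
    · have hvq : v q ≠ 0 := by
        have := coord_of_eq hu' q
        simp only [Finsupp.add_apply] at this
        omega
      have hv' : v - Finsupp.single q 1 + Finsupp.single p 1 ∈ monSlice I d := by
        refine hV (v - Finsupp.single q 1) p q hpq ?_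
        rw [sub_add_single hvq]; exact hvV
      refine monomial_dvd_mem ?_ hv'.2
      rw [mono_identB (ne_of_lt hpq) hu' hvq]
      exact self_le_add_right _ _
    · refine monomial_dvd_mem (v := v) ?_ hvV.2
      rw [mono_identC (p := p) hu' hwq]
      exact self_le_add_right _ _

lemma div_max_mem (hd : 0 < d) (hI : DLexIdeal d I) {u : Mono n} {q : Fin n}
    (hdeg : d < mdeg u) (hu : monomial u (1:K) ∈ I)
    (hq : u q ≠ 0) (hmax : ∀ s, q < s → u s = 0) :
    monomial (u - Finsupp.single q 1) (1:K) ∈ I := by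
  obtain ⟨hmon, ⟨hVd, hV, _⟩, hdiv, hlex⟩ := hI
  obtain ⟨v, hvV, hvle⟩ := hdiv u (le_of_lt hdeg) hu
  have hu' : v + (u - v) = u := add_tsub_cancel_of_le hvle
  set w := u - v with hw
  by_cases hwq : w q = 0
  · have hvq : v q ≠ 0 := by
      have := coord_of_eq hu' q
      simp only [Finsupp.add_apply] at this
      omega
    have hmw : mdeg v + mdeg w = mdeg u := by rw [← mdeg_add, hu']
    have hvd : mdeg v = d := hVd v hvV
    have hwne : w ≠ 0 := mono_ne_zero_of_mdeg (by omega)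
    obtain ⟨p, hp⟩ := Finsupp.support_nonempty_iff.mpr hwne
    have hwp : w p ≠ 0 := Finsupp.mem_support_iff.mp hp
    have hpq : p < q := by
      rcases lt_trichotomy p q with h | rfl | h
      · exact h
      · exact absurd hwq hwp
      · exfalso
        have h1 := coord_of_eq hu' p
        simp only [Finsupp.add_apply] at h1
        have h2 := hmax p h
        omega
    have hv' : v - Finsupp.single q 1 + Finsupp.single p 1 ∈ monSlice I d := by
      refine hV _ p q hpq ?_
      rw [sub_add_single hvq]; exact hvV
    refine monomial_dvd_mem ?_ hv'.2
    rw [mono_identA (ne_of_lt hpq) hu' hvq hwp]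
    exact self_le_add_right _ _
  · refine monomial_dvd_mem (v := v) ?_ hvV.2
    rw [mono_identD hu' hwq]
    exact self_le_add_right _ _

lemma mem_hComp_iff {z : ℤ} (hz : 0 ≤ z) (p : MvPolynomial (Fin n) K) :
    p ∈ hComp I z ↔ p ∈ I ∧ ∀ u ∈ p.support, mdeg u = z.toNat := by
  unfold hComp
  rw [if_pos hz]
  simp only [Submodule.mem_inf, Submodule.restrictScalars_mem]
  rw [homogeneousSubmodule_eq_finsupp_supported, AddMonoidAlgebra.mem_supported]
  constructor
  · rintro ⟨h1, h2⟩
    refine ⟨h1, fun u hu => ?_⟩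
    have := h2 hu
    simpa [mdeg_eq_degree] using this
  · rintro ⟨h1, h2⟩
    refine ⟨h1, fun u hu => ?_⟩
    simp only [Set.mem_setOf_eq]
    rw [← mdeg_eq_degree]
    exact h2 u hu

/-- the homotopy operator on coefficients: keep the monomials whose largest variable is `v`
and divide them by `x_v` -/
noncomputable def phi (v : Fin n) (p : MvPolynomial (Fin n) K) : MvPolynomial (Fin n) K :=
  ∑ u ∈ p.support.filter (fun u => u v ≠ 0 ∧ ∀ s, v < s → u s = 0),
    monomial (u - Finsupp.single v 1) (coeff u p)

lemma coeff_phi (v : Fin n) (p : MvPolynomial (Fin n) K) (a : Mono n) :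
    coeff a (phi v p) =
      if (∀ s, v < s → a s = 0) then coeff (a + Finsupp.single v 1) p else 0 := by
  classical
  unfold phi
  rw [coeff_sum]
  have hsub : ∀ u : Mono n, u v ≠ 0 → u - Finsupp.single v 1 = a → u = a + Finsupp.single v 1 := by
    intro u huv he
    rw [← he, sub_add_single huv]
  by_cases ha : ∀ s, v < s → a s = 0
  · rw [if_pos ha]
    rw [Finset.sum_eq_single (a + Finsupp.single v 1)]
    · rw [coeff_monomial, if_pos (add_tsub_cancel_right _ _)]
    · intro u hu hne
      simp only [Finset.mem_filter] at hu
      rw [coeff_monomial, if_neg]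
      intro he
      exact hne (hsub u hu.2.1 he)
    · intro hnotin
      rw [coeff_monomial, if_pos (add_tsub_cancel_right _ _)]
      by_contra hc
      refine hnotin (Finset.mem_filter.mpr ⟨mem_support_iff.mpr hc, ?_, fun s hs => ?_⟩)
      · simp only [Finsupp.add_apply, Finsupp.single_eq_same]
        omega
      · have h1 : ¬ v = s := fun h => absurd (h ▸ hs) (lt_irrefl _)
        simp only [Finsupp.add_apply, Finsupp.single_apply, if_neg h1, add_zero]
        exact ha s hs
  · rw [if_neg ha]
    refine Finset.sum_eq_zero fun u hu => ?_
    simp only [Finset.mem_filter] at hu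
    rw [coeff_monomial, if_neg]
    intro he
    refine ha fun s hs => ?_
    rw [← he]
    simp only [Finsupp.tsub_apply, hu.2.2 s hs]
    exact Nat.zero_sub _

lemma phi_mem (hd : 0 < d) (hI : DLexIdeal d I) (v : Fin n) {z : ℤ} (hz : (d:ℤ) < z)
    {p : MvPolynomial (Fin n) K} (hp : p ∈ hComp I z) : phi v p ∈ hComp I (z - 1) := by
  have hz0 : (0:ℤ) ≤ z := by omega
  rw [mem_hComp_iff hz0] at hp
  rw [mem_hComp_iff (by omega)]
  constructor
  · refine Submodule.sum_mem _ fun u hu => ?_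
    simp only [Finset.mem_filter] at hu
    obtain ⟨husup, huv, humax⟩ := hu
    have hmono : monomial u (1:K) ∈ I := hI.1 p hp.1 u husup
    have hdeg : mdeg u = z.toNat := hp.2 u husup
    have hdd : d < mdeg u := by omega
    have hdivmem := div_max_mem hd hI hdd hmono huv humax
    have heq : monomial (u - Finsupp.single v 1) (coeff u p)
        = (C (coeff u p)) * monomial (u - Finsupp.single v 1) 1 := by
      rw [C_mul_monomial, mul_one]
    rw [heq]
    exact Ideal.mul_mem_left _ _ hdivmem
  · intro a ha
    have hc : coeff a (phi v p) ≠ 0 := mem_support_iff.mp ha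
    rw [coeff_phi] at hc
    by_cases hq : ∀ s, v < s → a s = 0
    · rw [if_pos hq] at hc
      have hmem := hp.2 _ (mem_support_iff.mpr hc)
      rw [mdeg_add, mdeg_single] at hmem
      omega
    · rw [if_neg hq] at hc
      exact absurd rfl hc

end IdealAux

section KosAux
variable {n : ℕ} {K : Type} [Field K] (I : Ideal (MvPolynomial (Fin n) K))

lemma kosD_coeff (i : ℕ) (j : ℤ)
    (f : ({T : Finset (Fin n) // T.card = i + 1} → hComp I (j - (i + 1))))
    (T : {T : Finset (Fin n) // T.card = i}) (a : Mono n) :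
    coeff a (((kosD I i j f) T : MvPolynomial (Fin n) K)) =
      ∑ t ∈ ((T : Finset (Fin n))ᶜ),
        (-1:K) ^ (((T : Finset (Fin n)).filter fun x => x < t).card) *
          (if h : (insert t (T : Finset (Fin n))).card = i + 1 then
            (if t ∈ a.support then
              coeff (a - Finsupp.single t 1)
                ((f ⟨insert t (T : Finset (Fin n)), h⟩ : MvPolynomial (Fin n) K))
             else 0)
           else 0) := by
  classical
  have step1 : ((kosD I i j f) T : MvPolynomial (Fin n) K) =
      ∑ k ∈ ((T : Finset (Fin n))ᶜ).attach,
        ((-1:K) ^ (((T : Finset (Fin n)).filter fun x => x < (k : Fin n)).card)) •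
          (X (k : Fin n) *
            ((f ⟨insert (k : Fin n) (T : Finset (Fin n)), by
              rw [Finset.card_insert_of_notMem (Finset.mem_compl.mp k.2), T.2]⟩ :
                MvPolynomial (Fin n) K))) := by
    unfold kosD
    rw [LinearMap.pi_apply, LinearMap.sum_apply]
    rw [AddSubmonoidClass.coe_finset_sum]
    refine Finset.sum_congr rfl fun k hk => ?_
    rw [LinearMap.smul_apply, SetLike.val_smul]
    rfl
  rw [step1, coeff_sum]
  rw [← Finset.sum_attach ((T : Finset (Fin n))ᶜ) (fun t =>
      (-1:K) ^ (((T : Finset (Fin n)).filter fun x => x < t).card) *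
        (if h : (insert t (T : Finset (Fin n))).card = i + 1 then
          (if t ∈ a.support then
            coeff (a - Finsupp.single t 1)
              ((f ⟨insert t (T : Finset (Fin n)), h⟩ : MvPolynomial (Fin n) K))
           else 0)
         else 0))]
  refine Finset.sum_congr rfl fun k hk => ?_
  rw [coeff_smul, smul_eq_mul]
  congr 1
  rw [coeff_X_mul']
  rw [dif_pos (by rw [Finset.card_insert_of_notMem (Finset.mem_compl.mp k.2), T.2])]

end KosAux

section Exact
variable {n d : ℕ} {K : Type} [Field K] {I : Ideal (MvPolynomial (Fin n) K)}

/-- the largest variable appearing in an index set of cardinality `i+1` -/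
noncomputable def vmax {i : ℕ} (T' : {T : Finset (Fin n) // T.card = i + 1}) : Fin n :=
  (T' : Finset (Fin n)).max' (Finset.card_pos.mp (by rw [T'.2]; omega))

lemma vmax_mem {i : ℕ} (T' : {T : Finset (Fin n) // T.card = i + 1}) :
    vmax T' ∈ (T' : Finset (Fin n)) := Finset.max'_mem _ _

lemma vmax_eq {i : ℕ} (T' : {T : Finset (Fin n) // T.card = i + 1}) {v : Fin n}
    (hv : v ∈ (T' : Finset (Fin n))) (hall : ∀ x ∈ (T' : Finset (Fin n)), x ≤ v) :
    vmax T' = v :=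
  le_antisymm (Finset.max'_le _ _ _ hall) (Finset.le_max' _ _ hv)

/-- remove the largest variable from an index set -/
noncomputable def Te {i : ℕ} (T' : {T : Finset (Fin n) // T.card = i + 1}) :
    {T : Finset (Fin n) // T.card = i} :=
  ⟨(T' : Finset (Fin n)).erase (vmax T'), by
    rw [Finset.card_erase_of_mem (vmax_mem T'), T'.2]; omega⟩

lemma exactness (hd : 0 < d) (hI : DLexIdeal d I) (i : ℕ) (j : ℤ)
    (hij : (d:ℤ) + i < j)
    (z : {T : Finset (Fin n) // T.card = i} → hComp I (j - i))
    (hz : z ∈ bettiKer I i j) :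
    z ∈ LinearMap.range (kosD I i j) := by
  classical
  have hdi : (d:ℤ) < j - i := by omega
  have hj0 : (0:ℤ) ≤ j - i := by omega
  have hj1 : (0:ℤ) ≤ j - (i + 1) := by omega
  -- the cycle condition, in coefficient form
  have hcyc : ∀ S : Finset (Fin n), S.card + 1 = i → ∀ b : Mono n,
      ∑ s ∈ Sᶜ, (-1:K) ^ ((S.filter fun x => x < s).card) *
        (if h : (insert s S).card = i then
          (if s ∈ b.support then
            coeff (b - Finsupp.single s 1) ((z ⟨insert s S, h⟩ : MvPolynomial (Fin n) K))
           else 0)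
         else 0) = 0 := by
    cases i with
    | zero => intro S hS b; exact absurd hS (by omega)
    | succ i' =>
      intro S hS b
      have hker : kosD I i' j z = 0 := hz
      have h0 : ((kosD I i' j z) ⟨S, by omega⟩ : MvPolynomial (Fin n) K) = 0 := by
        rw [hker]; rfl
      have h1 := congrArg (coeff b) h0
      rw [kosD_coeff] at h1
      rw [coeff_zero] at h1
      exact h1
  -- the homotopy
  have hwmem : ∀ T' : {T : Finset (Fin n) // T.card = i + 1},
      (-1:K)^i • phi (vmax T') ((z (Te T') : MvPolynomial (Fin n) K)) ∈ hComp I (j - (i + 1)) := by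
    intro T'
    refine Submodule.smul_mem _ _ ?_
    have hmem := phi_mem hd hI (vmax T') hdi (z (Te T')).2
    have he : j - ((i:ℤ) + 1) = (j - (i:ℤ)) - 1 := by ring
    rw [he]
    exact hmem
  set w : {T : Finset (Fin n) // T.card = i + 1} → hComp I (j - (i + 1)) :=
    fun T' => ⟨(-1:K)^i • phi (vmax T') ((z (Te T') : MvPolynomial (Fin n) K)), hwmem T'⟩
    with hwdef
  have hw : ∀ (T' : {T : Finset (Fin n) // T.card = i + 1}) (b : Mono n),
      coeff b ((w T' : MvPolynomial (Fin n) K)) =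
        (-1:K)^i * (if (∀ s, vmax T' < s → b s = 0)
          then coeff (b + Finsupp.single (vmax T') 1) ((z (Te T') : MvPolynomial (Fin n) K))
          else 0) := by
    intro T' b
    have hval : (w T' : MvPolynomial (Fin n) K)
        = (-1:K)^i • phi (vmax T') ((z (Te T') : MvPolynomial (Fin n) K)) := by
      rw [hwdef]
    rw [hval, coeff_smul, smul_eq_mul, coeff_phi]
  refine ⟨w, ?_⟩
  funext T
  apply Subtype.ext
  apply MvPolynomial.ext
  intro a
  rw [kosD_coeff]
  by_cases hadeg : mdeg a = (j - (i:ℤ)).toNat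
  · -- main case : the right multidegree
    have hane : a ≠ 0 := mono_ne_zero_of_mdeg (by omega)
    have hasne : a.support.Nonempty := Finsupp.support_nonempty_iff.mpr hane
    have hUne : (a.support ∪ (T : Finset (Fin n))).Nonempty :=
      hasne.mono Finset.subset_union_left
    set v : Fin n := (a.support ∪ (T : Finset (Fin n))).max' hUne with hvdef
    have hvmax : ∀ s ∈ a.support ∪ (T : Finset (Fin n)), s ≤ v :=
      fun s hs => Finset.le_max' _ _ hs
    have hamax : ∀ s, v < s → a s = 0 := by
      intro s hs
      by_contra h
      exact absurd (hvmax s (Finset.mem_union_left _ (Finsupp.mem_support_iff.mpr h)))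
        (not_le.mpr hs)
    have hTle : ∀ x ∈ (T : Finset (Fin n)), x ≤ v :=
      fun x hx => hvmax x (Finset.mem_union_right _ hx)
    by_cases hvT : v ∈ (T : Finset (Fin n))
    · -- Case 1 : the cone vertex lies in T ; use the cycle condition
      have hTne : (T : Finset (Fin n)).Nonempty := ⟨v, hvT⟩
      have hipos : 0 < i := by
        have hcp := Finset.card_pos.mpr hTne
        rw [T.2] at hcp
        exact hcp
      set S : Finset (Fin n) := (T : Finset (Fin n)).erase v with hSdef
      have hSsub : S ⊆ (T : Finset (Fin n)) := Finset.erase_subset _ _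
      have hScard : S.card + 1 = i := by
        rw [hSdef, Finset.card_erase_of_mem hvT, T.2]
        omega
      have hSle : ∀ x ∈ S, x < v := fun x hx =>
        lt_of_le_of_ne (hTle x (hSsub hx)) (Finset.ne_of_mem_erase hx)
      have hc := hcyc S hScard (a + Finsupp.single v 1)
      have hcompl : Sᶜ = insert v ((T : Finset (Fin n)))ᶜ := by
        rw [hSdef, Finset.compl_erase]
      rw [hcompl, Finset.sum_insert (by simp [hvT])] at hc
      have hins : insert v S = (T : Finset (Fin n)) := by
        rw [hSdef, Finset.insert_erase hvT]
      simp only [hins] at hc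
      rw [dif_pos T.2] at hc
      simp only [Subtype.coe_eta] at hc
      have hbv : v ∈ (a + Finsupp.single v 1).support := by
        rw [Finsupp.mem_support_iff, Finsupp.add_apply, Finsupp.single_eq_same]
        omega
      rw [if_pos hbv, add_tsub_cancel_right] at hc
      rw [Finset.filter_true_of_mem hSle] at hc
      have hsum := eq_neg_of_add_eq_zero_right hc
      have hFG : ∀ t ∈ ((T : Finset (Fin n)))ᶜ,
          (-1:K) ^ (((T : Finset (Fin n)).filter fun x => x < t).card) *
            (if h : (insert t (T : Finset (Fin n))).card = i + 1 then
              (if t ∈ a.support then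
                coeff (a - Finsupp.single t 1)
                  ((w ⟨insert t (T : Finset (Fin n)), h⟩ : MvPolynomial (Fin n) K))
               else 0)
             else 0)
          = (-1:K)^i * ((-1:K) ^ ((S.filter fun x => x < t).card) *
            (if h : (insert t S).card = i then
              (if t ∈ (a + Finsupp.single v 1).support then
                coeff ((a + Finsupp.single v 1) - Finsupp.single t 1)
                  ((z ⟨insert t S, h⟩ : MvPolynomial (Fin n) K))
               else 0)
             else 0)) := by
        intro t ht
        have htT : t ∉ (T : Finset (Fin n)) := Finset.mem_compl.mp ht
        have htv : t ≠ v := fun h => htT (h ▸ hvT)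
        have hcardT : (insert t (T : Finset (Fin n))).card = i + 1 := by
          rw [Finset.card_insert_of_notMem htT, T.2]
        have htS : t ∉ S := fun h => htT (hSsub h)
        have hcardS : (insert t S).card = i := by
          rw [Finset.card_insert_of_notMem htS, hScard]
        rw [dif_pos hcardT, dif_pos hcardS]
        by_cases hta : t ∈ a.support
        · have htle : t < v := lt_of_le_of_ne (hvmax t (Finset.mem_union_left _ hta)) htv
          have hsigneq : (S.filter fun x => x < t)
              = ((T : Finset (Fin n)).filter fun x => x < t) := by
            rw [hSdef, Finset.filter_erase]
            refine Finset.erase_eq_of_notMem ?_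
            simp only [Finset.mem_filter, not_and]
            intro _
            exact not_lt.mpr (le_of_lt htle)
          have htb : t ∈ (a + Finsupp.single v 1).support := by
            rw [Finsupp.mem_support_iff, Finsupp.add_apply]
            have hvt' : ¬ v = t := fun h => htv h.symm
            rw [Finsupp.single_apply, if_neg hvt', add_zero]
            exact Finsupp.mem_support_iff.mp hta
          rw [if_pos hta, if_pos htb, hw]
          have hvm : vmax (⟨insert t (T : Finset (Fin n)), hcardT⟩ :
              {T : Finset (Fin n) // T.card = i + 1}) = v := by
            refine vmax_eq _ (Finset.mem_insert_of_mem hvT) fun x hx => ?_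
            rcases Finset.mem_insert.mp hx with rfl | hx
            · exact le_of_lt htle
            · exact hTle x hx
          rw [hvm]
          rw [if_pos (fun s hs => by
            rw [Finsupp.tsub_apply, hamax s hs]; exact Nat.zero_sub _)]
          have hTe' : Te (⟨insert t (T : Finset (Fin n)), hcardT⟩ :
              {T : Finset (Fin n) // T.card = i + 1}) = ⟨insert t S, hcardS⟩ := by
            apply Subtype.ext
            show (insert t (T : Finset (Fin n))).erase
              (vmax (⟨insert t (T : Finset (Fin n)), hcardT⟩ :
                {T : Finset (Fin n) // T.card = i + 1})) = insert t S
            rw [hvm, hSdef, Finset.erase_insert_of_ne htv]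
          rw [hTe']
          rw [mono_identE htv (Finsupp.mem_support_iff.mp hta)]
          rw [hsigneq]
          ring
        · have htb : t ∉ (a + Finsupp.single v 1).support := by
            rw [Finsupp.mem_support_iff, Finsupp.add_apply]
            have hvt' : ¬ v = t := fun h => htv h.symm
            rw [Finsupp.single_apply, if_neg hvt', add_zero]
            exact fun h => hta (Finsupp.mem_support_iff.mpr h)
          rw [if_neg hta, if_neg htb, mul_zero, mul_zero, mul_zero]
      rw [Finset.sum_congr rfl hFG, ← Finset.mul_sum, hsum]
      have h1 : (-1:K)^(S.card) * (-1:K)^(S.card) = 1 := by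
        rw [← mul_pow]; norm_num
      have h2 : (-1:K)^i = -1 * (-1:K)^(S.card) := by
        rw [← hScard, pow_succ, mul_comm]
      rw [h2]
      linear_combination (coeff a ((z T : MvPolynomial (Fin n) K))) * h1
    · -- Case 2 : the cone vertex is a new variable
      have hva : v ∈ a.support := by
        rcases Finset.mem_union.mp ((a.support ∪ (T : Finset (Fin n))).max'_mem hUne) with h | h
        · exact h
        · exact absurd h hvT
      have hav : a v ≠ 0 := Finsupp.mem_support_iff.mp hva
      have hcard : (insert v (T : Finset (Fin n))).card = i + 1 := by
        rw [Finset.card_insert_of_notMem hvT, T.2]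
      rw [Finset.sum_eq_single_of_mem v (Finset.mem_compl.mpr hvT) ?hother]
      · rw [dif_pos hcard, if_pos hva, hw]
        have hvm : vmax (⟨insert v (T : Finset (Fin n)), hcard⟩ :
            {T : Finset (Fin n) // T.card = i + 1}) = v := by
          refine vmax_eq _ (Finset.mem_insert_self _ _) fun x hx => ?_
          rcases Finset.mem_insert.mp hx with rfl | hx
          · exact le_rfl
          · exact hTle x hx
        rw [hvm]
        have hTe : Te (⟨insert v (T : Finset (Fin n)), hcard⟩ :
            {T : Finset (Fin n) // T.card = i + 1}) = T := by
          apply Subtype.ext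
          show (insert v (T : Finset (Fin n))).erase
            (vmax (⟨insert v (T : Finset (Fin n)), hcard⟩ :
              {T : Finset (Fin n) // T.card = i + 1})) = (T : Finset (Fin n))
          rw [hvm, Finset.erase_insert hvT]
        rw [hTe]
        rw [if_pos (fun s hs => by simp [Finsupp.tsub_apply, hamax s hs])]
        rw [sub_add_single hav]
        have hsign : (((T : Finset (Fin n))).filter fun x => x < v).card = i := by
          rw [Finset.filter_true_of_mem fun x hx => lt_of_le_of_ne (hTle x hx)
            (fun h => hvT (h ▸ hx)), T.2]
        rw [hsign, ← mul_assoc, ← pow_add, Even.neg_one_pow ⟨i, rfl⟩, one_mul]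
      case hother =>
        intro t ht htv
        by_cases hta : t ∈ a.support
        · have hcard' : (insert t (T : Finset (Fin n))).card = i + 1 := by
            rw [Finset.card_insert_of_notMem (Finset.mem_compl.mp ht), T.2]
          rw [dif_pos hcard', if_pos hta, hw]
          have hvm' : vmax (⟨insert t (T : Finset (Fin n)), hcard'⟩ :
              {T : Finset (Fin n) // T.card = i + 1}) < v := by
            have h1 : vmax (⟨insert t (T : Finset (Fin n)), hcard'⟩ :
                {T : Finset (Fin n) // T.card = i + 1}) ∈ insert t (T : Finset (Fin n)) :=
              vmax_mem _
            have h2 : (vmax (⟨insert t (T : Finset (Fin n)), hcard'⟩ :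
                {T : Finset (Fin n) // T.card = i + 1})) ≤ v := by
              rcases Finset.mem_insert.mp h1 with h | h
              · rw [h]; exact hvmax t (Finset.mem_union_left _ hta)
              · exact hTle _ h
            rcases lt_or_eq_of_le h2 with h | h
            · exact h
            · exfalso
              rw [h] at h1
              rcases Finset.mem_insert.mp h1 with h3 | h3
              · exact htv h3.symm
              · exact hvT h3
          rw [if_neg, mul_zero, mul_zero]
          intro hQ
          have := hQ v hvm'
          have hvt : ¬ t = v := fun h => htv h
          rw [Finsupp.tsub_apply] at this
          simp only [Finsupp.single_apply, if_neg hvt, tsub_zero] at this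
          exact hav this
        · rw [dif_pos (by rw [Finset.card_insert_of_notMem (Finset.mem_compl.mp ht), T.2]),
            if_neg hta, mul_zero]
  · -- wrong multidegree : both sides vanish
    have hza : coeff a ((z T : MvPolynomial (Fin n) K)) = 0 := by
      by_contra h
      exact hadeg (((mem_hComp_iff hj0 _).mp (z T).2).2 a (mem_support_iff.mpr h))
    rw [hza]
    refine Finset.sum_eq_zero fun t ht => ?_
    have hcard' : (insert t (T : Finset (Fin n))).card = i + 1 := by
      rw [Finset.card_insert_of_notMem (Finset.mem_compl.mp ht), T.2]
    rw [dif_pos hcard']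
    by_cases hta : t ∈ a.support
    · have hwz : coeff (a - Finsupp.single t 1)
          ((w ⟨insert t (T : Finset (Fin n)), hcard'⟩ : MvPolynomial (Fin n) K)) = 0 := by
        by_contra h
        have hdeg := ((mem_hComp_iff hj1 _).mp
          (w ⟨insert t (T : Finset (Fin n)), hcard'⟩).2).2 _ (mem_support_iff.mpr h)
        have hat : a t ≠ 0 := Finsupp.mem_support_iff.mp hta
        have := mdeg_sub_single hat
        omega
      rw [if_pos hta, hwz, mul_zero]
    · rw [if_neg hta, mul_zero]

end Exact

section Final
variable {n d : ℕ} {K : Type} [Field K] {I : Ideal (MvPolynomial (Fin n) K)}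

lemma betti_eq_zero (hd : 0 < d) (hI : DLexIdeal d I) (i : ℕ) (k : ℤ) (hk : (d:ℤ) < k) :
    betti I i ((i:ℤ) + k) = 0 := by
  have hsub : bettiKer I i ((i:ℤ) + k) ≤ LinearMap.range (kosD I i ((i:ℤ) + k)) :=
    fun z hz => exactness hd hI i ((i:ℤ) + k) (by omega) z hz
  unfold betti
  rw [inf_eq_right.mpr hsub]
  exact Nat.sub_self _

lemma reg_le_d (hd : 0 < d) (hI : DLexIdeal d I) : reg I ≤ (d : ℤ) := by
  unfold reg
  by_cases hne : {k : ℤ | ∃ i : ℕ, betti I i ((i : ℤ) + k) ≠ 0}.Nonempty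
  · refine csSup_le hne fun k hk => ?_
    obtain ⟨i, hbi⟩ := hk
    by_contra h
    push_neg at h
    exact hbi (betti_eq_zero hd hI i k h)
  · rw [Set.not_nonempty_iff_eq_empty.mp hne, Int.csSup_empty]
    exact_mod_cast Nat.zero_le d

end Final

/-- every `d`-lexsegment ideal is strongly stable and `d`-regular. -/
theorem stmt6 (n d : ℕ) (hn : 0 < n) (hd : 0 < d) (K : Type) [Field K]
    (I : Ideal (MvPolynomial (Fin n) K)) (hI : DLexIdeal d I) :
    SStableIdeal I ∧ reg I ≤ (d : ℤ) :=
  ⟨sstable_of_dlex hd hI, reg_le_d hd hI⟩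

end Paper
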